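/- For every nonnegative integer n, the shifted Hankel determinant d_1(n,t) = \det( M_{1+i+j}(t) )_{i,j=0}^{n-1} equals the Fibonacci polynomial F_n(t) (with the convention d_1(0,t) = 1 = F_0(t)). -/
import Mathlib

open Polynomial

/-- The weight polynomials `M_{n,k}(t)` of Motzkin paths from `(0,0)` to `(n,k)`. -/
noncomputable def motzkinPoly : ℕ → ℤ → Polynomial ℤ
  | 0, k => if k = 0 then 1 else 0
  | n + 1, k =>
      if k < 0 then 0 else
        motzkinPoly n (k - 1) + X * motzkinPoly n k + motzkinPoly n (k + 1)
  termination_by n _ => n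


/-- The Fibonacci polynomials: `F_0 = 1`, `F_1 = t`, `F_n = t·F_{n-1} - F_{n-2}`. -/
noncomputable def fibPoly : ℕ → Polynomial ℤ
  | 0 => 1
  | 1 => X
  | n + 2 => X * fibPoly (n + 1) - fibPoly n

lemma motzkin_zero_zero : motzkinPoly 0 0 = 1 := by rw [motzkinPoly]; simp

lemma motzkin_neg (n : ℕ) (k : ℤ) (hk : k < 0) : motzkinPoly n k = 0 := by
  cases n with
  | zero => rw [motzkinPoly]; simp; omega
  | succ n => rw [motzkinPoly]; simp [hk]

lemma motzkin_rec (n : ℕ) (k : ℤ) (hk : 0 ≤ k) :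
    motzkinPoly (n+1) k
      = motzkinPoly n (k-1) + X * motzkinPoly n k + motzkinPoly n (k+1) := by
  rw [motzkinPoly]; simp [not_lt.mpr hk]

lemma motzkin_big (n : ℕ) (k : ℤ) (hk : (n:ℤ) < k) : motzkinPoly n k = 0 := by
  induction n generalizing k with
  | zero => rw [motzkinPoly]; simp; omega
  | succ n ih =>
    rw [motzkin_rec n k (by omega), ih (k-1) (by omega), ih k (by omega),
      ih (k+1) (by omega)]
    simp

lemma motzkin_diag (n : ℕ) : motzkinPoly n (n:ℤ) = 1 := by
  induction n with
  | zero => rw [motzkinPoly]; simp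
  | succ n ih =>
    rw [motzkin_rec n _ (by positivity)]
    push_cast
    rw [motzkin_big n ((n:ℤ)+1) (by omega), motzkin_big n ((n:ℤ)+1+1) (by omega)]
    simpa using ih

lemma motzkin_split (j m : ℕ) :
    motzkinPoly (m + j) 0
      = ∑ k ∈ Finset.range (j+1), motzkinPoly j (k:ℤ) * motzkinPoly m (k:ℤ) := by
  induction j generalizing m with
  | zero => simp [motzkin_zero_zero]
  | succ j ih =>
    have h1 : m + (j+1) = (m+1) + j := by omega
    rw [h1, ih (m+1)]
    have hrec : ∀ k ∈ Finset.range (j+1),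
        motzkinPoly j (k:ℤ) * motzkinPoly (m+1) (k:ℤ)
          = motzkinPoly j (k:ℤ) * motzkinPoly m ((k:ℤ)-1)
            + X * (motzkinPoly j (k:ℤ) * motzkinPoly m (k:ℤ))
            + motzkinPoly j (k:ℤ) * motzkinPoly m ((k:ℤ)+1) := by
      intro k _
      rw [motzkin_rec m (k:ℤ) (by positivity)]; ring
    rw [Finset.sum_congr rfl hrec]
    rw [Finset.sum_add_distrib, Finset.sum_add_distrib]
    have hrec2 : ∀ k ∈ Finset.range (j+2),
        motzkinPoly (j+1) (k:ℤ) * motzkinPoly m (k:ℤ)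
          = motzkinPoly j ((k:ℤ)-1) * motzkinPoly m (k:ℤ)
            + X * (motzkinPoly j (k:ℤ) * motzkinPoly m (k:ℤ))
            + motzkinPoly j ((k:ℤ)+1) * motzkinPoly m (k:ℤ) := by
      intro k _
      rw [motzkin_rec j (k:ℤ) (by positivity)]; ring
    rw [Finset.sum_congr rfl hrec2, Finset.sum_add_distrib, Finset.sum_add_distrib]
    have hA : ∑ k ∈ Finset.range (j+1), motzkinPoly j (k:ℤ) * motzkinPoly m ((k:ℤ)-1)
        = ∑ k ∈ Finset.range (j+2), motzkinPoly j ((k:ℤ)+1) * motzkinPoly m (k:ℤ) := by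
      rw [Finset.sum_range_succ' (fun k => motzkinPoly j (k:ℤ) * motzkinPoly m ((k:ℤ)-1)) j]
      simp only [Nat.cast_zero, Nat.cast_add, Nat.cast_one]
      rw [motzkin_neg m (0-1:ℤ) (by omega)]
      rw [Finset.sum_range_succ (fun k => motzkinPoly j ((k:ℤ)+1) * motzkinPoly m (k:ℤ)) (j+1),
        Finset.sum_range_succ (fun k => motzkinPoly j ((k:ℤ)+1) * motzkinPoly m (k:ℤ)) j]
      rw [motzkin_big j ((j:ℤ)+1) (by omega)]
      rw [motzkin_big j ((((j:ℕ)+1:ℕ):ℤ)+1) (by push_cast; omega)]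
      simp [add_sub_cancel_right]
    have hB : ∑ k ∈ Finset.range (j+1), X * (motzkinPoly j (k:ℤ) * motzkinPoly m (k:ℤ))
        = ∑ k ∈ Finset.range (j+2), X * (motzkinPoly j (k:ℤ) * motzkinPoly m (k:ℤ)) := by
      rw [Finset.sum_range_succ (fun k => X * (motzkinPoly j (k:ℤ) * motzkinPoly m (k:ℤ))) (j+1)]
      rw [motzkin_big j (((j:ℕ)+1:ℕ):ℤ) (by push_cast; omega)]
      simp
    have hC : ∑ k ∈ Finset.range (j+1), motzkinPoly j (k:ℤ) * motzkinPoly m ((k:ℤ)+1)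
        = ∑ k ∈ Finset.range (j+2), motzkinPoly j ((k:ℤ)-1) * motzkinPoly m (k:ℤ) := by
      rw [Finset.sum_range_succ' (fun k => motzkinPoly j ((k:ℤ)-1) * motzkinPoly m (k:ℤ)) (j+1)]
      simp only [Nat.cast_zero, Nat.cast_add, Nat.cast_one]
      rw [motzkin_neg j (0-1:ℤ) (by omega)]
      push_cast
      simp [add_sub_cancel_right]
    rw [hA, hB, hC]
    ring

noncomputable def triDiag (n : ℕ) : Matrix (Fin n) (Fin n) (Polynomial ℤ) :=
  Matrix.of fun i j =>
    if (i:ℕ) = (j:ℕ) then X else if (i:ℕ)+1 = (j:ℕ) ∨ (j:ℕ)+1 = (i:ℕ) then 1 else 0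

lemma det_triDiag : ∀ n : ℕ, (triDiag n).det = fibPoly n
  | 0 => by simp [fibPoly]
  | 1 => by
      rw [show (triDiag 1).det = triDiag 1 0 0 from Matrix.det_fin_one _]
      simp [triDiag, fibPoly]
  | (n+2) => by
      rw [Matrix.det_succ_column_zero, Fin.sum_univ_succ, Fin.sum_univ_succ]
      have hz : ∀ i : Fin n, triDiag (n+2) i.succ.succ 0 = 0 := by
        intro i
        simp only [triDiag, Matrix.of_apply]
        have h1 : (i.succ.succ : ℕ) = (i:ℕ) + 2 := rfl
        rw [h1]
        norm_num
      have hsum0 : ∀ i : Fin n,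
          (-1:Polynomial ℤ)^((i.succ.succ:ℕ)) * triDiag (n+2) i.succ.succ 0 *
            ((triDiag (n+2)).submatrix i.succ.succ.succAbove Fin.succ).det = 0 := by
        intro i; rw [hz i]; ring
      rw [Finset.sum_congr rfl (fun i _ => hsum0 i), Finset.sum_const_zero]
      have e00 : triDiag (n+2) 0 0 = X := by simp [triDiag]
      have e10 : triDiag (n+2) 1 0 = 1 := by
        simp only [triDiag, Matrix.of_apply]
        norm_num [Fin.val_one]
      have hsub1 : (triDiag (n+2)).submatrix Fin.succ Fin.succ = triDiag (n+1) := by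
        ext i j
        simp only [Matrix.submatrix_apply, triDiag, Matrix.of_apply, Fin.succAbove_zero,
          Fin.val_succ]
        split_ifs <;> first | rfl | omega
      have hsub2 : ((triDiag (n+2)).submatrix (Fin.succAbove 1) Fin.succ).det
          = (triDiag n).det := by
        rw [Matrix.det_succ_row_zero, Fin.sum_univ_succ]
        have hrow : ∀ j : Fin n,
            ((triDiag (n+2)).submatrix (Fin.succAbove 1) Fin.succ) 0 j.succ = 0 := by
          intro j
          simp only [Matrix.submatrix_apply, triDiag, Matrix.of_apply]
          have h0 : ((Fin.succAbove 1 0 : Fin (n+2)) : ℕ) = 0 := rfl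
          have h1 : ((j.succ.succ : Fin (n+2)) : ℕ) = (j:ℕ) + 2 := rfl
          rw [h0, h1]
          norm_num
        have hsum1 : ∀ j : Fin n,
            (-1:Polynomial ℤ)^((j.succ:ℕ)) *
              ((triDiag (n+2)).submatrix (Fin.succAbove 1) Fin.succ) 0 j.succ *
              ((((triDiag (n+2)).submatrix (Fin.succAbove 1) Fin.succ)).submatrix Fin.succ
                j.succ.succAbove).det = 0 := by
          intro j; rw [hrow j]; ring
        rw [Finset.sum_congr rfl (fun j _ => hsum1 j), Finset.sum_const_zero, add_zero]
        have he : ((triDiag (n+2)).submatrix (Fin.succAbove 1) Fin.succ) 0 0 = 1 := by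
          have h0 : ((Fin.succAbove 1 0 : Fin (n+2)) : ℕ) = 0 := rfl
          simp only [Matrix.submatrix_apply, triDiag, Matrix.of_apply]
          rw [h0]
          norm_num [Fin.val_one]
        rw [he]
        have hsub : (((triDiag (n+2)).submatrix (Fin.succAbove 1) Fin.succ)).submatrix Fin.succ
            (Fin.succAbove 0) = triDiag n := by
          ext i j
          have hv : ((Fin.succAbove 1 i.succ : Fin (n+2)) : ℕ) = (i:ℕ) + 2 := by
            rw [Fin.succAbove_of_le_castSucc]
            · rfl
            · rw [Fin.le_castSucc_iff]
              simp [Fin.lt_def]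
          simp only [Matrix.submatrix_apply, triDiag, Matrix.of_apply, Fin.succAbove_zero,
            Fin.val_succ, hv]
          split_ifs <;> first | rfl | omega
        rw [hsub]
        simp
      rw [show (Fin.succ (0 : Fin (n+1)) : Fin (n+2)) = 1 from rfl, e00, e10,
        Fin.succAbove_zero, hsub1, hsub2, det_triDiag (n+1), det_triDiag n,
        show fibPoly (n+2) = X * fibPoly (n+1) - fibPoly n from rfl]
      norm_num [Fin.val_one]
      ring

noncomputable def motzB (n : ℕ) : Matrix (Fin n) (Fin n) (Polynomial ℤ) :=
  Matrix.of fun i k => motzkinPoly (i:ℕ) ((k:ℕ):ℤ)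

lemma det_motzB (n : ℕ) : (motzB n).det = 1 := by
  have ht : (motzB n).BlockTriangular OrderDual.toDual := by
    intro i j hij
    exact motzkin_big _ _ (by exact_mod_cast hij)
  rw [Matrix.det_of_lowerTriangular _ ht]
  simp [motzB, motzkin_diag]

lemma motzInnerSum (n i : ℕ) (hi : i < n) (l : Fin n) :
    ∑ k : Fin n, motzkinPoly i ((k:ℕ):ℤ) * triDiag n k l
      = motzkinPoly (i+1) ((l:ℕ):ℤ) := by
  have hsplit : ∀ k : Fin n, triDiag n k l
      = (if (k:ℕ) = (l:ℕ) then X else 0) + (if (k:ℕ)+1 = (l:ℕ) then 1 else 0)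
        + (if (l:ℕ)+1 = (k:ℕ) then 1 else 0) := by
    intro k
    simp only [triDiag, Matrix.of_apply]
    split_ifs <;> first | ring1 | (exfalso; omega)
  simp only [hsplit, mul_add, Finset.sum_add_distrib]
  have h1 : ∑ k : Fin n, motzkinPoly i ((k:ℕ):ℤ) * (if (k:ℕ) = (l:ℕ) then X else 0)
      = X * motzkinPoly i ((l:ℕ):ℤ) := by
    rw [Finset.sum_eq_single l]
    · simp [mul_comm]
    · intro b _ hb
      rw [if_neg (fun h => hb (Fin.ext h)), mul_zero]
    · intro h; exact absurd (Finset.mem_univ l) h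
  have h2 : ∑ k : Fin n, motzkinPoly i ((k:ℕ):ℤ) * (if (k:ℕ)+1 = (l:ℕ) then 1 else 0)
      = motzkinPoly i (((l:ℕ):ℤ)-1) := by
    rcases Nat.eq_zero_or_pos (l:ℕ) with hl | hl
    · rw [Finset.sum_eq_zero, hl]
      · rw [motzkin_neg i _ (by norm_num)]
      · intro k _
        rw [if_neg (by omega), mul_zero]
    · obtain ⟨m, hm⟩ := Nat.exists_eq_succ_of_ne_zero (Nat.pos_iff_ne_zero.mp hl)
      have hmn : m < n := by omega
      rw [Finset.sum_eq_single (⟨m, hmn⟩ : Fin n)]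
      · rw [if_pos (by simp [hm]), mul_one]
        congr 1
        rw [show ((⟨m, hmn⟩ : Fin n) : ℕ) = m from rfl, hm]
        push_cast
        try ring
      · intro b _ hb
        rw [if_neg, mul_zero]
        intro h
        exact hb (Fin.ext (show (b:ℕ) = m by omega))
      · intro h; exact absurd (Finset.mem_univ _) h
  have h3 : ∑ k : Fin n, motzkinPoly i ((k:ℕ):ℤ) * (if (l:ℕ)+1 = (k:ℕ) then 1 else 0)
      = motzkinPoly i (((l:ℕ):ℤ)+1) := by
    rcases lt_or_ge ((l:ℕ)+1) n with hl | hl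
    · rw [Finset.sum_eq_single (⟨(l:ℕ)+1, hl⟩ : Fin n)]
      · rw [if_pos rfl, mul_one]
        congr 1
        try push_cast
        try ring
      · intro b _ hb
        rw [if_neg, mul_zero]
        intro h
        exact hb (Fin.ext (show (b:ℕ) = (l:ℕ)+1 by omega))
      · intro h; exact absurd (Finset.mem_univ _) h
    · rw [Finset.sum_eq_zero, motzkin_big i _ (by push_cast; omega)]
      intro k _
      rw [if_neg (by omega), mul_zero]
  rw [h1, h2, h3, motzkin_rec i _ (by positivity)]
  ring

/-- The shifted Hankel determinant `d_1(n,t) = det(M_{1+i+j}(t))` equals `F_n(t)`. -/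

theorem hankel_det_motzkin_shift_one (n : ℕ) :
    Matrix.det (Matrix.of fun i j : Fin n => motzkinPoly (1 + (i : ℕ) + (j : ℕ)) 0) =
      fibPoly n := by
  have hH : (Matrix.of fun i j : Fin n => motzkinPoly (1 + (i : ℕ) + (j : ℕ)) 0)
      = motzB n * triDiag n * (motzB n).transpose := by
    apply Matrix.ext
    intro i j
    rw [Matrix.mul_apply]
    have hin : ∀ l : Fin n, (motzB n * triDiag n) i l = motzkinPoly ((i:ℕ)+1) ((l:ℕ):ℤ) := by
      intro l
      rw [Matrix.mul_apply]
      exact motzInnerSum n i i.isLt l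
    simp only [hin]
    simp only [Matrix.transpose_apply, Matrix.of_apply, motzB]
    have key := motzkin_split (j:ℕ) ((i:ℕ)+1)
    have harg : 1 + (i:ℕ) + (j:ℕ) = (i:ℕ)+1 + (j:ℕ) := by omega
    rw [harg, key]
    rw [Fin.sum_univ_eq_sum_range
      (fun l => motzkinPoly ((i:ℕ)+1) (l:ℤ) * motzkinPoly (j:ℕ) (l:ℤ)) n]
    rw [← Finset.sum_subset (Finset.range_subset_range.mpr (by omega : (j:ℕ)+1 ≤ n))
      (fun k _ hk => by
        simp only [Finset.mem_range, not_lt] at hk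
        rw [motzkin_big (j:ℕ) (k:ℤ) (by exact_mod_cast hk), mul_zero])]
    exact Finset.sum_congr rfl (fun k _ => mul_comm _ _)
  rw [hH, Matrix.det_mul, Matrix.det_mul, Matrix.det_transpose, det_motzB, det_triDiag]
  ring
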